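/- For X = ℕ with the usual order, the relative rank of O(ℕ) modulo J = {α ∈ O(ℕ) : Im(α) is infinite} equals ℵ₀. In particular, the set of order-preserving self-maps of ℕ with finite image is countably infinite. -/

import Mathlib

open Set

/-- The set of monotone finite-range self-maps of ℕ. -/
private def Sfin : Set (ℕ → ℕ) := {f : ℕ → ℕ | Monotone f ∧ (Set.range f).Finite}

private lemma Sfin_countable : Sfin.Countable := by
  refine Set.Countable.mono ?_
    (Set.countable_range (fun L : List ℕ => fun k => L.getD (min k (L.length - 1)) 0))
  rintro f ⟨hmono, hfin⟩
    -- f has a point where it attains its max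
  obtain ⟨m, ⟨a, ha⟩, hmax⟩ : ∃ m ∈ Set.range f, ∀ m' ∈ Set.range f, id m ≤ id m' → id m = id m' := by
    obtain ⟨m, hm, hmx⟩ := Set.Finite.exists_maximalFor id _ hfin (Set.range_nonempty f)
    exact ⟨m, hm, fun m' hm' hle => le_antisymm hle (hmx hm' hle)⟩
  have hconst : ∀ k, a ≤ k → f k = f a := by
    intro k hk
    have h1 : f a ≤ f k := hmono hk
    have := hmax (f k) ⟨k, rfl⟩
    simp only [id_eq, ha] at this ⊢
    omega
  refine ⟨(List.range (a + 1)).map f, ?_⟩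
  funext k
  have hlen : ((List.range (a + 1)).map f).length = a + 1 := by simp
  show ((List.range (a + 1)).map f).getD (min k (((List.range (a + 1)).map f).length - 1)) 0 = f k
  by_cases hka : k ≤ a
  · have hmin : min k (((List.range (a + 1)).map f).length - 1) = k := by
      rw [hlen]; omega
    rw [hmin, List.getD_eq_getElem _ _ (by rw [hlen]; omega)]
    simp
  · have hmin : min k (((List.range (a + 1)).map f).length - 1) = a := by
      rw [hlen]; omega
    rw [hmin, List.getD_eq_getElem _ _ (by rw [hlen]; omega)]
    simp [hconst k (by omega)]

private lemma Sfin_infinite : Sfin.Infinite := by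
  refine Set.infinite_of_injective_forall_mem (f := fun c : ℕ => (fun _ => c : ℕ → ℕ))
    (fun c c' h => congrFun h 0) ?_
  intro c
  refine ⟨monotone_const, ?_⟩
  exact (Set.finite_singleton c).subset (by simp [Set.range_const])

/-- Key induction: a composition of monotone maps is either unbounded, or its range
is contained in the image of the range of one finite-range factor. -/
private lemma key (l : List (ℕ → ℕ)) (hm : ∀ f ∈ l, Monotone f) :
    (∀ m, ∃ n, m ≤ l.foldr (· ∘ ·) id n) ∨
    ∃ f ∈ l, (Set.range f).Finite ∧ ∃ h : ℕ → ℕ,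
      Set.range (l.foldr (· ∘ ·) id) ⊆ h '' Set.range f := by
  induction l with
  | nil =>
    left; intro m; exact ⟨m, le_refl m⟩
  | cons f t ih =>
    by_cases hf : (Set.range f).Finite
    · right
      refine ⟨f, List.mem_cons_self, hf, id, ?_⟩
      rw [Set.image_id]
      simp only [List.foldr_cons]
      exact Set.range_comp_subset_range _ _
    · -- f has infinite range, hence is unbounded
      have hfu : ∀ m, ∃ n, m ≤ f n := by
        intro m
        by_contra hcon
        push_neg at hcon
        exact hf ((Set.finite_Iio m).subset (by rintro _ ⟨n, rfl⟩; exact hcon n))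
      rcases ih (fun g hg => hm g (List.mem_cons_of_mem _ hg)) with hu | ⟨f', hf', hfin, h, hsub⟩
      · left
        intro m
        obtain ⟨n, hn⟩ := hfu m
        obtain ⟨k, hk⟩ := hu n
        refine ⟨k, hn.trans ?_⟩
        simpa using (hm f List.mem_cons_self) hk
      · right
        refine ⟨f', List.mem_cons_of_mem _ hf', hfin, f ∘ h, ?_⟩
        simp only [List.foldr_cons]
        calc Set.range (f ∘ t.foldr (· ∘ ·) id)
            ⊆ f '' Set.range (t.foldr (· ∘ ·) id) := by
              rw [Set.range_comp]
          _ ⊆ f '' (h '' Set.range f') := Set.image_mono hsub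
          _ = (f ∘ h) '' Set.range f' := by rw [Set.image_comp]

theorem stmt_17 :
    let J : Set (ℕ → ℕ) := {f | Monotone f ∧ (Set.range f).Infinite}
    let gen : Set (ℕ → ℕ) → Prop := fun B =>
      ∀ α : ℕ → ℕ, Monotone α → ∃ l : List (ℕ → ℕ), l ≠ [] ∧
        (∀ f ∈ l, f ∈ J ∪ B) ∧ α = l.foldr (· ∘ ·) id
    ((∃ B : Set (ℕ → ℕ), (∀ f ∈ B, Monotone f) ∧ gen B ∧
        Cardinal.mk ↥B = Cardinal.aleph0) ∧
     (∀ B : Set (ℕ → ℕ), (∀ f ∈ B, Monotone f) → gen B →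
        Cardinal.aleph0 ≤ Cardinal.mk ↥B) ∧
     {f : ℕ → ℕ | Monotone f ∧ (Set.range f).Finite}.Countable ∧
     {f : ℕ → ℕ | Monotone f ∧ (Set.range f).Finite}.Infinite) := by
  intro J gen
  refine ⟨?_, ?_, Sfin_countable, Sfin_infinite⟩
  · -- existence of a countable generating set: take B = Sfin
    refine ⟨Sfin, fun f hf => hf.1, ?_, ?_⟩
    · intro α hα
      refine ⟨[α], by simp, ?_, rfl⟩
      intro f hf
      simp only [List.mem_singleton] at hf
      rw [hf]
      by_cases hfin : (Set.range α).Finite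
      · exact Or.inr ⟨hα, hfin⟩
      · exact Or.inl ⟨hα, hfin⟩
    · refine le_antisymm ?_ ?_
      · exact Cardinal.mk_le_aleph0_iff.mpr (Set.countable_coe_iff.mpr Sfin_countable)
      · exact Cardinal.aleph0_le_mk_iff.mpr (Set.infinite_coe_iff.mpr Sfin_infinite)
  · -- lower bound: any generating set is infinite
    intro B hBmono hBgen
    by_contra hcon
    have hBfin : B.Finite := by
      rw [← Set.not_infinite]
      intro hinf
      exact hcon (Cardinal.aleph0_le_mk_iff.mpr (Set.infinite_coe_iff.mpr hinf))
    set N := hBfin.toFinset.sup (fun g => (Set.range g).ncard) with hN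
    set β : ℕ → ℕ := fun n => min n (N + 1) with hβ
    have hβmono : Monotone β := fun a b hab => min_le_min hab le_rfl
    obtain ⟨l, hlne, hall, heq⟩ := hBgen β hβmono
    have hlm : ∀ f ∈ l, Monotone f := by
      intro f hf
      rcases hall f hf with h | h
      · exact h.1
      · exact hBmono f h
    rcases key l hlm with hu | ⟨f, hfl, hfin, h, hsub⟩
    · obtain ⟨n, hn⟩ := hu (N + 2)
      rw [← heq] at hn
      simp only [hβ] at hn
      omega
    · rw [← heq] at hsub
      have hfB : f ∈ B := by
        rcases hall f hfl with hJ | hB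
        · exact absurd hfin hJ.2
        · exact hB
      have hrange : Set.range β = Set.Iic (N + 1) := by
        ext k
        constructor
        · rintro ⟨n, rfl⟩
          exact Set.mem_Iic.mpr (min_le_right _ _)
        · intro hk
          exact ⟨k, min_eq_left hk⟩
      have h1 : (Set.range β).ncard = N + 2 := by
        rw [hrange, ← Finset.coe_Iic, Set.ncard_coe_finset, Nat.card_Iic]
      have h2 : (Set.range β).ncard ≤ (h '' Set.range f).ncard :=
        Set.ncard_le_ncard hsub (hfin.image h)
      have h3 : (h '' Set.range f).ncard ≤ (Set.range f).ncard :=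
        Set.ncard_image_le hfin
      have h4 : (Set.range f).ncard ≤ N :=
        Finset.le_sup (f := fun g => (Set.range g).ncard) (hBfin.mem_toFinset.mpr hfB)
      omega
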